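/- Let R > 0 and μ > 0. Define R_i : [0, π/2) → ℝ by R_i(u) = R/μ + √((S(u) − r(u))²·(S(u) − l(u)) / S(u)), where r(u) = R/cos u, l(u) = 2·R·tan u, S(u) = (2·r(u) + l(u))/2. Then R_i is strictly monotonically increasing on [0, π/2). -/

import Mathlib

open Real

/-- The varying curvature radius of the geometric controller (Eq. (12)). -/
noncomputable def Ri (R μ : ℝ) (u : ℝ) : ℝ :=
  let r := R / Real.cos u
  let l := 2 * R * Real.tan u
  let S := (2 * r + l) / 2
  R / μ + Real.sqrt ((S - r) ^ 2 * (S - l) / S)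

lemma Ri_eq (R μ : ℝ) (hR : 0 < R) {u : ℝ} (hu : u ∈ Set.Ico 0 (π / 2)) :
    Ri R μ u = R / μ + R * (Real.sin u / (1 + Real.sin u)) := by
  obtain ⟨h0, h2⟩ := hu
  have hpi := Real.pi_pos
  have hc : 0 < Real.cos u := Real.cos_pos_of_mem_Ioo ⟨by linarith, h2⟩
  have hs0 : 0 ≤ Real.sin u := Real.sin_nonneg_of_nonneg_of_le_pi h0 (by linarith)
  have hpyth := Real.sin_sq_add_cos_sq u
  have hs1 : Real.sin u < 1 := by nlinarith
  set s := Real.sin u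
  set c := Real.cos u
  have htan : Real.tan u = s / c := Real.tan_eq_sin_div_cos u
  have harg : ((2 * (R / c) + 2 * R * Real.tan u) / 2 - R / c) ^ 2 *
      ((2 * (R / c) + 2 * R * Real.tan u) / 2 - 2 * R * Real.tan u) /
      ((2 * (R / c) + 2 * R * Real.tan u) / 2)
      = (R * s * (1 - s) / c ^ 2) ^ 2 := by
    rw [htan]
    have h1s : (0:ℝ) < 1 + s := by linarith
    have hS : 2 * (R / c) + 2 * R * (s / c) ≠ 0 := by
      have : 2 * (R / c) + 2 * R * (s / c) = 2 * R * (1 + s) / c := by ring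
      rw [this]
      positivity
    field_simp
    linear_combination (s ^ 2 * (1 - s)) * hpyth
  have hnn : 0 ≤ R * s * (1 - s) / c ^ 2 :=
    div_nonneg (mul_nonneg (mul_nonneg hR.le hs0) (by linarith)) (by positivity)
  have hfin : R * s * (1 - s) / c ^ 2 = R * (s / (1 + s)) := by
    have hcs : c ^ 2 = (1 - s) * (1 + s) := by nlinarith
    rw [hcs]
    have h1s : (0:ℝ) < 1 + s := by linarith
    rcases eq_or_lt_of_le hs0 with h | h
    · rw [← h]; simp
    · have h1ms : (1:ℝ) - s ≠ 0 := by nlinarith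
      field_simp
  simp only [Ri]
  rw [harg, Real.sqrt_sq hnn, hfin]

/-- **Strict monotonicity of the curvature radius `R_i`.**
Larger user steering angles produce a strictly larger curvature radius. -/
theorem Ri_strictMonoOn (R μ : ℝ) (hR : 0 < R) (hμ : 0 < μ) :
    StrictMonoOn (Ri R μ) (Set.Ico 0 (π / 2)) := by
  intro a ha b hb hab
  rw [Ri_eq R μ hR ha, Ri_eq R μ hR hb]
  have hpi := Real.pi_pos
  have hsa0 : 0 ≤ Real.sin a := Real.sin_nonneg_of_nonneg_of_le_pi ha.1 (by linarith [ha.2])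
  have hsin : Real.sin a < Real.sin b := by
    apply Real.strictMonoOn_sin ⟨by linarith [ha.1], le_of_lt ha.2⟩
      ⟨by linarith [hb.1], le_of_lt hb.2⟩ hab
  have h1a : (0:ℝ) < 1 + Real.sin a := by linarith
  have h1b : (0:ℝ) < 1 + Real.sin b := by linarith
  have : Real.sin a / (1 + Real.sin a) < Real.sin b / (1 + Real.sin b) := by
    rw [div_lt_div_iff₀ h1a h1b]
    nlinarith
  nlinarith
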